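/- There exists a constant C > 0 such that for every measurable function v : ℝ³ → ℝ with finite L⁶ norm ‖v‖_{L⁶} and with f∘v having finite L² norm ‖f∘v‖_{L²} (with respect to Lebesgue measure on ℝ³), one has ‖v‖_{L²} ≤ C·(‖v‖_{L⁶} + ‖f∘v‖_{L²}² + ‖f∘v‖_{L²}). -/

import Mathlib

open MeasureTheory ENNReal NNReal

section Aux
variable (f : ℝ → ℝ) (hf0 : f 0 = 0)
    (hf' : ∀ t : ℝ, HasDerivAt f (1 / Real.sqrt (1 + 2 * f t ^ 2)) t)

lemma sqrt_pos_aux (t : ℝ) : 0 < Real.sqrt (1 + 2 * f t ^ 2) :=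
  Real.sqrt_pos.mpr (by nlinarith [sq_nonneg (f t)])

lemma sqrt_ge_one_aux (t : ℝ) : 1 ≤ Real.sqrt (1 + 2 * f t ^ 2) := by
  nlinarith [Real.sq_sqrt (show (0:ℝ) ≤ 1 + 2 * f t ^ 2 by positivity),
    Real.sqrt_nonneg (1 + 2 * f t ^ 2), sq_nonneg (f t)]

include hf' in
lemma f_mono : Monotone f := by
  refine monotone_of_deriv_nonneg (fun t => (hf' t).differentiableAt) fun t => ?_
  rw [(hf' t).deriv]
  positivity

include hf0 hf' in
lemma f_nonneg : ∀ t, 0 ≤ t → 0 ≤ f t := fun t ht => hf0 ▸ f_mono f hf' ht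

include hf0 hf' in
lemma f_le_self : ∀ t, 0 ≤ t → f t ≤ t := by
  intro t ht
  have hmono : Monotone (fun t => t - f t) := by
    refine monotone_of_deriv_nonneg (fun x => (differentiable_id x).sub (hf' x).differentiableAt)
      fun x => ?_
    have hd : HasDerivAt (fun t => t - f t) (1 - 1 / Real.sqrt (1 + 2 * f x ^ 2)) x :=
      (hasDerivAt_id x).sub (hf' x)
    rw [hd.deriv]
    have h1 := sqrt_ge_one_aux f x
    have h0 := sqrt_pos_aux f x
    have : 1 / Real.sqrt (1 + 2 * f x ^ 2) ≤ 1 := by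
      rw [div_le_one h0]; exact h1
    linarith
  have := hmono ht
  simp only [hf0, sub_zero] at this
  linarith

include hf0 hf' in
lemma f_lower : ∀ t, 0 ≤ t → t ≤ f t + Real.sqrt 2 * f t ^ 2 := by
  intro t ht
  have hmono : MonotoneOn (fun t => f t + Real.sqrt 2 * f t ^ 2 - t) (Set.Ici 0) := by
    refine monotoneOn_of_deriv_nonneg (convex_Ici 0) ?_ ?_ ?_
    · exact Continuous.continuousOn (Differentiable.continuous (fun x =>
        (((hf' x).differentiableAt.add
          (((hf' x).differentiableAt.pow 2).const_mul _)).sub (differentiable_id x))))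
    · exact fun x _ => (((hf' x).differentiableAt.add
        (((hf' x).differentiableAt.pow 2).const_mul _)).sub (differentiable_id x)).differentiableWithinAt
    · intro x hx
      rw [interior_Ici] at hx
      have hd : HasDerivAt (fun t => f t + Real.sqrt 2 * f t ^ 2 - t)
          (1 / Real.sqrt (1 + 2 * f x ^ 2) +
            Real.sqrt 2 * (2 * f x ^ 1 * (1 / Real.sqrt (1 + 2 * f x ^ 2))) - 1) x :=
        ((hf' x).add (((hf' x).pow 2).const_mul _)).sub (hasDerivAt_id x)
      rw [hd.deriv]
      have hfx : 0 ≤ f x := f_nonneg f hf0 hf' x hx.le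
      have h0 := sqrt_pos_aux f x
      have hs2 : (0:ℝ) ≤ Real.sqrt 2 := Real.sqrt_nonneg 2
      have hsq2 : Real.sqrt 2 ^ 2 = 2 := Real.sq_sqrt (by norm_num)
      have hle : Real.sqrt (1 + 2 * f x ^ 2) ≤ 1 + 2 * Real.sqrt 2 * f x := by
        rw [show 1 + 2 * Real.sqrt 2 * f x = Real.sqrt ((1 + 2 * Real.sqrt 2 * f x) ^ 2) from
          (Real.sqrt_sq (by nlinarith)).symm]
        exact Real.sqrt_le_sqrt (by nlinarith)
      have key : (1:ℝ) ≤ (1 + 2 * Real.sqrt 2 * f x) / Real.sqrt (1 + 2 * f x ^ 2) :=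
        (one_le_div h0).mpr hle
      have heq : 1 / Real.sqrt (1 + 2 * f x ^ 2) +
          Real.sqrt 2 * (2 * f x ^ 1 * (1 / Real.sqrt (1 + 2 * f x ^ 2)))
          = (1 + 2 * Real.sqrt 2 * f x) / Real.sqrt (1 + 2 * f x ^ 2) := by
        field_simp
      rw [heq]; linarith
  have := hmono (Set.self_mem_Ici) (Set.mem_Ici.mpr ht) ht
  simp only [hf0, mul_zero, zero_pow, add_zero, sub_zero] at this
  norm_num at this
  linarith

include hf0 hf' in
lemma f_lower_small : ∀ t, 0 ≤ t → t ≤ 1 → t ≤ Real.sqrt 3 * f t := by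
  intro t ht ht1
  have hmono : MonotoneOn (fun t => Real.sqrt 3 * f t - t) (Set.Icc 0 1) := by
    refine monotoneOn_of_deriv_nonneg (convex_Icc 0 1) ?_ ?_ ?_
    · exact Continuous.continuousOn (Differentiable.continuous (fun x =>
        (((hf' x).differentiableAt.const_mul _).sub (differentiable_id x))))
    · exact fun x _ =>
        (((hf' x).differentiableAt.const_mul _).sub (differentiable_id x)).differentiableWithinAt
    · intro x hx
      rw [interior_Icc] at hx
      have hd : HasDerivAt (fun t => Real.sqrt 3 * f t - t)
          (Real.sqrt 3 * (1 / Real.sqrt (1 + 2 * f x ^ 2)) - 1) x :=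
        ((hf' x).const_mul _).sub (hasDerivAt_id x)
      rw [hd.deriv]
      have h0 := sqrt_pos_aux f x
      have hfx : 0 ≤ f x := f_nonneg f hf0 hf' x hx.1.le
      have hfle : f x ≤ 1 := (f_le_self f hf0 hf' x hx.1.le).trans hx.2.le
      have hle : Real.sqrt (1 + 2 * f x ^ 2) ≤ Real.sqrt 3 :=
        Real.sqrt_le_sqrt (by nlinarith)
      have key : (1:ℝ) ≤ Real.sqrt 3 / Real.sqrt (1 + 2 * f x ^ 2) := (one_le_div h0).mpr hle
      have heq : Real.sqrt 3 * (1 / Real.sqrt (1 + 2 * f x ^ 2))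
          = Real.sqrt 3 / Real.sqrt (1 + 2 * f x ^ 2) := by ring
      rw [heq]; linarith
  have := hmono (Set.mem_Icc.mpr ⟨le_refl 0, zero_le_one⟩) (Set.mem_Icc.mpr ⟨ht, ht1⟩) ht
  simp only [hf0, mul_zero, sub_zero] at this
  linarith

end Aux

section Abs
variable (f : ℝ → ℝ) (hf0 : f 0 = 0) (hfodd : ∀ t : ℝ, f (-t) = -f t)
    (hf' : ∀ t : ℝ, HasDerivAt f (1 / Real.sqrt (1 + 2 * f t ^ 2)) t)

include hf0 hfodd hf' in
lemma abs_small : ∀ t : ℝ, |t| ≤ 1 → |t| ≤ Real.sqrt 3 * |f t| := by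
  intro t ht
  rcases le_or_gt 0 t with h | h
  · rw [abs_of_nonneg h] at ht ⊢
    rw [abs_of_nonneg (f_nonneg f hf0 hf' t h)]
    exact f_lower_small f hf0 hf' t h ht
  · rw [abs_of_neg h] at ht ⊢
    have := f_lower_small f hf0 hf' (-t) (by linarith) ht
    rw [hfodd t] at this
    have hfle : f t ≤ 0 := by
      have := f_nonneg f hf0 hf' (-t) (by linarith)
      rw [hfodd t] at this; linarith
    rw [abs_of_nonpos hfle]
    linarith

include hf0 hfodd hf' in
lemma abs_large : ∀ t : ℝ, 1 ≤ |t| →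
    |t| ≤ (Real.sqrt 3 + Real.sqrt 2) * f t ^ 2 := by
  have key : ∀ t : ℝ, 1 ≤ t → t ≤ (Real.sqrt 3 + Real.sqrt 2) * f t ^ 2 := by
    intro t ht
    have h1 : 1 ≤ Real.sqrt 3 * f 1 := f_lower_small f hf0 hf' 1 zero_le_one le_rfl
    have hmono : f 1 ≤ f t := f_mono f hf' ht
    have hft : 0 ≤ f t := f_nonneg f hf0 hf' t (by linarith)
    have hlow := f_lower f hf0 hf' t (by linarith)
    have h3 : (0:ℝ) ≤ Real.sqrt 3 := Real.sqrt_nonneg 3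
    have h5 : 1 ≤ Real.sqrt 3 * f t := le_trans h1 (mul_le_mul_of_nonneg_left hmono h3)
    have h4 : f t ≤ Real.sqrt 3 * f t ^ 2 := by nlinarith [mul_le_mul_of_nonneg_right h5 hft]
    nlinarith
  intro t ht
  rcases le_or_gt 0 t with h | h
  · rw [abs_of_nonneg h] at ht ⊢; exact key t ht
  · rw [abs_of_neg h] at ht ⊢
    have := key (-t) ht
    rw [hfodd t] at this
    nlinarith
end Abs


/-- There exists `C > 0` such that for every measurable `v : ℝ³ → ℝ` with finite `L⁶` norm
and with `f ∘ v` of finite `L²` norm, one has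
`‖v‖_{L²} ≤ C (‖v‖_{L⁶} + ‖f∘v‖_{L²}² + ‖f∘v‖_{L²})`. -/
theorem stmt_15 (f : ℝ → ℝ) (hf0 : f 0 = 0)
    (hfodd : ∀ t : ℝ, f (-t) = -f t)
    (hf' : ∀ t : ℝ, HasDerivAt f (1 / Real.sqrt (1 + 2 * f t ^ 2)) t) :
    ∃ C : ℝ, 0 < C ∧
      ∀ v : EuclideanSpace ℝ (Fin 3) → ℝ, Measurable v →
        eLpNorm v 6 volume < ⊤ →
        eLpNorm (fun x => f (v x)) 2 volume < ⊤ →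
        eLpNorm v 2 volume ≤ ENNReal.ofReal C *
          (eLpNorm v 6 volume + eLpNorm (fun x => f (v x)) 2 volume ^ 2 +
            eLpNorm (fun x => f (v x)) 2 volume) := by
  have h3 : (1:ℝ) ≤ Real.sqrt 3 := by
    nlinarith [Real.sq_sqrt (show (0:ℝ) ≤ 3 by norm_num), Real.sqrt_nonneg 3]
  have h2 : (0:ℝ) ≤ Real.sqrt 2 := Real.sqrt_nonneg 2
  set C : ℝ := Real.sqrt 3 + Real.sqrt 2 with hCdef
  have hC1 : (1:ℝ) ≤ C := by simp only [hCdef]; linarith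
  refine ⟨C, by linarith, ?_⟩
  intro v hv _ _
  set N2 := eLpNorm (fun x => f (v x)) 2 volume with hN2
  set N6 := eLpNorm v 6 volume with hN6
  set s : Set (EuclideanSpace ℝ (Fin 3)) := {x | |v x| ≤ 1} with hsdef
  have hs : MeasurableSet s := measurableSet_le hv.abs measurable_const
  set w₁ := s.indicator v with hw1def
  set w₂ := sᶜ.indicator v with hw2def
  have hw1m : Measurable w₁ := hv.indicator hs
  have hw2m : Measurable w₂ := hv.indicator hs.compl
  -- Step 1: triangle inequality
  have step1 : eLpNorm v 2 volume ≤ eLpNorm w₁ 2 volume + eLpNorm w₂ 2 volume := by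
    have hsum : v = w₁ + w₂ := (Set.indicator_self_add_compl s v).symm
    nth_rewrite 1 [hsum]
    exact eLpNorm_add_le hw1m.aestronglyMeasurable hw2m.aestronglyMeasurable one_le_two
  -- Step 2: small part
  have step2 : eLpNorm w₁ 2 volume ≤ ENNReal.ofReal (Real.sqrt 3) * N2 := by
    have hpt : ∀ x, ‖w₁ x‖ ≤ ((Real.sqrt 3 : ℝ) • fun x => ‖f (v x)‖) x := by
      intro x
      simp only [Pi.smul_apply, smul_eq_mul]
      by_cases hx : x ∈ s
      · rw [hw1def, Set.indicator_of_mem hx, Real.norm_eq_abs, Real.norm_eq_abs]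
        exact abs_small f hf0 hfodd hf' (v x) hx
      · rw [hw1def, Set.indicator_of_notMem hx, norm_zero]
        positivity
    calc eLpNorm w₁ 2 volume
        ≤ eLpNorm ((Real.sqrt 3 : ℝ) • fun x => ‖f (v x)‖) 2 volume :=
          eLpNorm_mono_real hpt
      _ = (‖(Real.sqrt 3 : ℝ)‖₊ : ℝ≥0∞) * eLpNorm (fun x => ‖f (v x)‖) 2 volume :=
          eLpNorm_const_smul _ _ _ _
      _ = ENNReal.ofReal (Real.sqrt 3) * N2 := by
          rw [eLpNorm_norm, ← enorm_eq_nnnorm, Real.enorm_eq_ofReal (Real.sqrt_nonneg 3)]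
  -- Step 4: large part in L¹
  have step4 : eLpNorm w₂ 1 volume ≤ ENNReal.ofReal C * N2 ^ 2 := by
    have hpt : ∀ x, ‖w₂ x‖ ≤ ((C : ℝ) • fun x => ‖f (v x)‖ ^ (2:ℝ)) x := by
      intro x
      simp only [Pi.smul_apply, smul_eq_mul]
      by_cases hx : x ∈ s
      · rw [hw2def, Set.indicator_of_notMem (by simpa using hx), norm_zero]
        positivity
      · rw [hw2def, Set.indicator_of_mem (by simpa using hx), Real.norm_eq_abs]
        have hx' : 1 ≤ |v x| := by
          have : ¬ |v x| ≤ 1 := hx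
          linarith [lt_of_not_ge this]
        have := abs_large f hf0 hfodd hf' (v x) hx'
        rw [Real.norm_eq_abs, show |f (v x)| ^ (2:ℝ) = |f (v x)| ^ (2:ℕ) from
          Real.rpow_natCast _ 2, sq_abs]
        exact this
    calc eLpNorm w₂ 1 volume
        ≤ eLpNorm ((C : ℝ) • fun x => ‖f (v x)‖ ^ (2:ℝ)) 1 volume := eLpNorm_mono_real hpt
      _ = (‖(C : ℝ)‖₊ : ℝ≥0∞) * eLpNorm (fun x => ‖f (v x)‖ ^ (2:ℝ)) 1 volume :=
          eLpNorm_const_smul _ _ _ _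
      _ = ENNReal.ofReal C *
          eLpNorm (fun x => f (v x)) (1 * ENNReal.ofReal 2) volume ^ (2:ℝ) := by
          rw [eLpNorm_norm_rpow _ two_pos, ← enorm_eq_nnnorm, Real.enorm_eq_ofReal (by linarith)]
      _ = ENNReal.ofReal C * N2 ^ 2 := by
          rw [show ((2:ℝ) = ((2:ℕ):ℝ)) by norm_num, ENNReal.rpow_natCast]
          norm_num
          rfl
  -- Step 5: L⁶ bound
  have step5 : eLpNorm w₂ 6 volume ≤ N6 :=
    eLpNorm_mono fun x => norm_indicator_le_norm_self v x
  -- Step 3: interpolation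
  have step3 : eLpNorm w₂ 2 volume ≤ eLpNorm w₂ 1 volume + eLpNorm w₂ 6 volume := by
    set g : EuclideanSpace ℝ (Fin 3) → ℝ≥0∞ := fun x => (‖w₂ x‖₊ : ℝ≥0∞) with hg
    have hgm : Measurable g := hw2m.enorm
    set I1 := ∫⁻ x, g x ∂volume with hI1
    set I6 := ∫⁻ x, g x ^ (6:ℝ) ∂volume with hI6
    have holder : (∫⁻ x, g x ^ (2:ℝ) ∂volume) ≤ I1 ^ (4/5 : ℝ) * I6 ^ (1/5 : ℝ) := by
      have hpq : (5/4 : ℝ).HolderConjugate 5 := Real.holderConjugate_iff.mpr ⟨by norm_num, by norm_num⟩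
      have hm1 : AEMeasurable (fun x => g x ^ (4/5 : ℝ)) volume :=
        ((ENNReal.continuous_rpow_const.measurable).comp hgm).aemeasurable
      have hm2 : AEMeasurable (fun x => g x ^ (6/5 : ℝ)) volume :=
        ((ENNReal.continuous_rpow_const.measurable).comp hgm).aemeasurable
      have := ENNReal.lintegral_mul_le_Lp_mul_Lq volume hpq hm1 hm2
      calc (∫⁻ x, g x ^ (2:ℝ) ∂volume)
          = ∫⁻ x, ((fun x => g x ^ (4/5:ℝ)) * fun x => g x ^ (6/5:ℝ)) x ∂volume := by
            refine lintegral_congr fun x => ?_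
            simp only [Pi.mul_apply]
            rw [← ENNReal.rpow_add_of_nonneg _ _ (by norm_num) (by norm_num)]
            norm_num
        _ ≤ (∫⁻ x, (g x ^ (4/5:ℝ)) ^ (5/4:ℝ) ∂volume) ^ (1/(5/4):ℝ) *
            (∫⁻ x, (g x ^ (6/5:ℝ)) ^ (5:ℝ) ∂volume) ^ (1/(5:ℝ)) := this
        _ = I1 ^ (4/5 : ℝ) * I6 ^ (1/5 : ℝ) := by
            congr 1
            · rw [show (1/(5/4):ℝ) = (4/5:ℝ) by norm_num]
              congr 1
              refine lintegral_congr fun x => ?_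
              rw [← ENNReal.rpow_mul]
              norm_num
            · rw [show (1/(5:ℝ)) = (1/5:ℝ) by norm_num]
              congr 1
              refine lintegral_congr fun x => ?_
              rw [← ENNReal.rpow_mul]
              norm_num
    have e2 : eLpNorm w₂ 2 volume = (∫⁻ x, g x ^ (2:ℝ) ∂volume) ^ (1/2 : ℝ) := by
      rw [eLpNorm_eq_lintegral_rpow_enorm_toReal (by norm_num) (by norm_num),
        show ((2:ℝ≥0∞)).toReal = (2:ℝ) by norm_num]
      rfl
    have e1 : eLpNorm w₂ 1 volume = I1 := eLpNorm_one_eq_lintegral_enorm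
    have e6 : eLpNorm w₂ 6 volume = I6 ^ (1/6 : ℝ) := by
      rw [eLpNorm_eq_lintegral_rpow_enorm_toReal (by norm_num) (by norm_num),
        show ((6:ℝ≥0∞)).toReal = (6:ℝ) by norm_num, hI6, hg]
      rfl
    set a := eLpNorm w₂ 1 volume
    set b := eLpNorm w₂ 6 volume
    have hI6b : I6 = b ^ (6:ℝ) := by
      rw [e6, ← ENNReal.rpow_mul]; norm_num
    calc eLpNorm w₂ 2 volume
        = (∫⁻ x, g x ^ (2:ℝ) ∂volume) ^ (1/2 : ℝ) := e2
      _ ≤ (I1 ^ (4/5 : ℝ) * I6 ^ (1/5 : ℝ)) ^ (1/2 : ℝ) :=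
          ENNReal.rpow_le_rpow holder (by norm_num)
      _ = a ^ (2/5 : ℝ) * b ^ (3/5 : ℝ) := by
          rw [ENNReal.mul_rpow_of_nonneg _ _ (by norm_num : (0:ℝ) ≤ 1/2),
            ← ENNReal.rpow_mul, ← ENNReal.rpow_mul, hI6b, ← ENNReal.rpow_mul, e1]
          norm_num
      _ ≤ (a + b) ^ (2/5 : ℝ) * (a + b) ^ (3/5 : ℝ) := by
          gcongr
          · exact le_self_add
          · exact le_add_self
      _ = a + b := by
          rw [← ENNReal.rpow_add_of_nonneg _ _ (by norm_num) (by norm_num)]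
          norm_num
  -- Combine
  calc eLpNorm v 2 volume
      ≤ eLpNorm w₁ 2 volume + eLpNorm w₂ 2 volume := step1
    _ ≤ ENNReal.ofReal (Real.sqrt 3) * N2 +
        (ENNReal.ofReal C * N2 ^ 2 + N6) :=
        add_le_add step2 (step3.trans (add_le_add step4 step5))
    _ ≤ ENNReal.ofReal C * N2 +
        (ENNReal.ofReal C * N2 ^ 2 + ENNReal.ofReal C * N6) := by
        refine add_le_add (mul_le_mul_left (ENNReal.ofReal_le_ofReal (by linarith)) _)
          (add_le_add le_rfl ?_)
        refine le_mul_of_one_le_left' ?_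
        rw [show (1:ℝ≥0∞) = ENNReal.ofReal 1 by simp]
        exact ENNReal.ofReal_le_ofReal hC1
    _ = ENNReal.ofReal C * (N6 + N2 ^ 2 + N2) := by ring
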